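/- Let Γ be a finitely generated group and γ_1, γ_2 ∈ Γ. Then the following are equivalent: (i) for every finite group G, writing K = K_Γ(G), there is an automorphism of Γ/K mapping γ_1K to γ_2K; (ii) for every finite-index normal subgroup N ◁ Γ there exists a finite-index normal subgroup K ◁ Γ with K ≤ N such that there is an automorphism of Γ/K mapping γ_1K to γ_2K. -/

import Mathlib

/-- `Kgrp Γ G` is the intersection of all normal subgroups `N ◁ Γ` with `Γ/N ≅ G`
(equivalently, of the kernels of all surjective homomorphisms `Γ →* G`); it equals
`Γ` if `G` is not a quotient of `Γ`. -/
def Kgrp (Γ : Type) [Group Γ] (G : Type) [Group G] : Subgroup Γ :=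
  ⨅ (φ : Γ →* G) (_ : Function.Surjective φ), φ.ker

instance Kgrp_normal (Γ : Type) [Group Γ] (G : Type) [Group G] : (Kgrp Γ G).Normal := by
  constructor
  intro n hn g
  simp only [Kgrp, Subgroup.mem_iInf] at hn ⊢
  intro φ hφ
  have h1 := hn φ hφ
  simp only [MonoidHom.mem_ker] at h1 ⊢
  simp [map_mul, h1]

/-- There is an automorphism of `Γ ⧸ K` mapping `a K` to `b K`. -/
def AutEquivInQuotient {Γ : Type} [Group Γ] (K : Subgroup Γ) [K.Normal] (a b : Γ) : Prop :=
  ∃ θ : MulAut (Γ ⧸ K), θ (QuotientGroup.mk a) = QuotientGroup.mk b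

section Aux

variable {Γ : Type} [Group Γ]

/-- Finitely many homomorphisms from a f.g. group to a finite group. -/
lemma finite_monoidHom (G : Type) [Group G] [Finite G] [Group.FG Γ] :
    Finite (Γ →* G) := by
  obtain ⟨S, hS, hfin⟩ := Group.fg_iff.mp ‹Group.FG Γ›
  have : Finite S := hfin
  have hinj : Function.Injective (fun (φ : Γ →* G) (s : S) => φ s) := by
    intro f g h
    refine MonoidHom.eq_of_eqOn_dense hS ?_
    intro x hx
    exact congrFun h ⟨x, hx⟩
  exact Finite.of_injective _ hinj

set_option maxHeartbeats 1000000 in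
lemma Kgrp_finiteIndex (G : Type) [Group G] [Finite G] [Group.FG Γ] :
    (Kgrp Γ G).FiniteIndex := by
  have : Finite (Γ →* G) := finite_monoidHom G
  have hK : Kgrp Γ G = ⨅ φ : {φ : Γ →* G // Function.Surjective φ}, (φ : Γ →* G).ker := by
    rw [Kgrp, iInf_subtype']
  rw [hK]
  exact Subgroup.finiteIndex_iInf fun φ => Subgroup.finiteIndex_ker _

lemma mem_Kgrp {G : Type} [Group G] {x : Γ} :
    x ∈ Kgrp Γ G ↔ ∀ φ : Γ →* G, Function.Surjective φ → φ x = 1 := by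
  simp [Kgrp, Subgroup.mem_iInf, MonoidHom.mem_ker]

variable {G : Type} [Group G] (K' : Subgroup Γ) [K'.Normal] (h : K' ≤ Kgrp Γ G)

/-- The projection `Γ ⧸ K' →* Γ ⧸ Kgrp Γ G`. -/
def projK : Γ ⧸ K' →* Γ ⧸ Kgrp Γ G :=
  QuotientGroup.map K' (Kgrp Γ G) (MonoidHom.id Γ) (by simpa using h)

lemma projK_mk (x : Γ) : projK K' h (QuotientGroup.mk x) = QuotientGroup.mk x := rfl

/-- `Kgrp Γ G / K'` is characteristic in `Γ ⧸ K'`: any automorphism maps it into itself. -/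
lemma theta_maps_K (θ : MulAut (Γ ⧸ K')) {k : Γ} (hk : k ∈ Kgrp Γ G) :
    projK K' h (θ (QuotientGroup.mk k)) = 1 := by
  obtain ⟨g, hg⟩ := QuotientGroup.mk_surjective (θ (QuotientGroup.mk k))
  have hgK : g ∈ Kgrp Γ G := by
    rw [mem_Kgrp]
    intro φ hφ
    have hker : K' ≤ φ.ker := le_trans h (by
      intro x hx
      exact (mem_Kgrp.mp hx) φ hφ)
    set φbar : Γ ⧸ K' →* G := QuotientGroup.lift K' φ hker with hφbar
    have hφbar_mk : ∀ y : Γ, φbar (QuotientGroup.mk y) = φ y := fun y => rfl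
    set ψ : Γ →* G := φbar.comp (θ.toMonoidHom.comp (QuotientGroup.mk' K')) with hψ
    have hψsurj : Function.Surjective ψ := by
      intro z
      obtain ⟨y, hy⟩ := hφ z
      obtain ⟨w, hw⟩ := QuotientGroup.mk_surjective (θ.symm (QuotientGroup.mk y))
      refine ⟨w, ?_⟩
      have : θ (QuotientGroup.mk w) = QuotientGroup.mk y := by
        rw [hw]; exact θ.apply_symm_apply _
      simp only [hψ, MonoidHom.comp_apply, QuotientGroup.mk'_apply, MulEquiv.coe_toMonoidHom]
      rw [this, hφbar_mk, hy]
    have hψk : ψ k = 1 := (mem_Kgrp.mp hk) ψ hψsurj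
    have : ψ k = φ g := by
      simp only [hψ, MonoidHom.comp_apply, QuotientGroup.mk'_apply, MulEquiv.coe_toMonoidHom]
      rw [← hg, hφbar_mk]
    rw [← this, hψk]
  rw [← hg, projK_mk]
  exact (QuotientGroup.eq_one_iff g).mpr hgK

/-- The homomorphism `Γ ⧸ Kgrp Γ G →* Γ ⧸ Kgrp Γ G` induced by `θ : MulAut (Γ ⧸ K')`. -/
def descHom (θ : MulAut (Γ ⧸ K')) : Γ ⧸ Kgrp Γ G →* Γ ⧸ Kgrp Γ G :=
  QuotientGroup.lift (Kgrp Γ G)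
    ((projK K' h).comp (θ.toMonoidHom.comp (QuotientGroup.mk' K')))
    (fun k hk => theta_maps_K K' h θ hk)

lemma descHom_mk (θ : MulAut (Γ ⧸ K')) (x : Γ) :
    descHom K' h θ (QuotientGroup.mk x) = projK K' h (θ (QuotientGroup.mk x)) := rfl

lemma descHom_comp (θ₁ θ₂ : MulAut (Γ ⧸ K')) :
    (descHom K' h θ₁).comp (descHom K' h θ₂) = descHom K' h (θ₁ * θ₂) := by
  refine QuotientGroup.monoidHom_ext _ ?_
  ext x
  obtain ⟨y, hy⟩ := QuotientGroup.mk_surjective (θ₂ (QuotientGroup.mk x))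
  simp only [MonoidHom.comp_apply, QuotientGroup.mk'_apply]
  rw [descHom_mk, descHom_mk, ← hy, projK_mk, descHom_mk]
  rw [hy]
  rfl

lemma descHom_id : descHom K' h 1 = MonoidHom.id _ := by
  refine QuotientGroup.monoidHom_ext _ ?_
  ext x
  simp only [MonoidHom.comp_apply, QuotientGroup.mk'_apply, MonoidHom.id_apply]
  rw [descHom_mk]
  simp only [MulAut.one_apply]
  exact projK_mk K' h x

/-- The automorphism of `Γ ⧸ Kgrp Γ G` induced by `θ : MulAut (Γ ⧸ K')`. -/
def descAut (θ : MulAut (Γ ⧸ K')) : MulAut (Γ ⧸ Kgrp Γ G) :=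
  MonoidHom.toMulEquiv (descHom K' h θ) (descHom K' h θ⁻¹)
    (by rw [descHom_comp, inv_mul_cancel, descHom_id])
    (by rw [descHom_comp, mul_inv_cancel, descHom_id])

lemma descAut_mk (θ : MulAut (Γ ⧸ K')) (x : Γ) :
    descAut K' h θ (QuotientGroup.mk x) = projK K' h (θ (QuotientGroup.mk x)) := rfl

end Aux

/-- Let `Γ` be a finitely generated group and `γ₁, γ₂ ∈ Γ`.  The following are
equivalent: (i) for every finite group `G`, with `K = K_Γ(G)`, there is an
automorphism of `Γ/K` mapping `γ₁ K` to `γ₂ K`; (ii) for every finite-index normal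
subgroup `N ◁ Γ` there is a finite-index normal subgroup `K ◁ Γ` with `K ≤ N` such
that some automorphism of `Γ/K` maps `γ₁ K` to `γ₂ K`. -/
theorem autEquiv_in_char_quotients_iff_in_deep_quotients
    (Γ : Type) [Group Γ] [Group.FG Γ] (γ₁ γ₂ : Γ) :
    (∀ (G : Type) [Group G] [Finite G], AutEquivInQuotient (Kgrp Γ G) γ₁ γ₂) ↔
    (∀ N : Subgroup Γ, N.Normal → N.index ≠ 0 →
      ∃ (K : Subgroup Γ) (hK : K.Normal), K.index ≠ 0 ∧ K ≤ N ∧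
        @AutEquivInQuotient Γ _ K hK γ₁ γ₂) := by
  constructor
  · intro hi N hN hNindex
    haveI : N.Normal := hN
    haveI : N.FiniteIndex := ⟨hNindex⟩
    haveI : Finite (Γ ⧸ N) := Subgroup.finite_quotient_of_finiteIndex
    refine ⟨Kgrp Γ (Γ ⧸ N), inferInstance, (Kgrp_finiteIndex (Γ ⧸ N)).index_ne_zero, ?_, ?_⟩
    · intro x hx
      have := (mem_Kgrp.mp hx) (QuotientGroup.mk' N) (QuotientGroup.mk'_surjective N)
      simpa [QuotientGroup.eq_one_iff] using this
    · exact hi (Γ ⧸ N)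
  · intro hii G _ _
    set K := Kgrp Γ G with hKdef
    haveI : K.FiniteIndex := Kgrp_finiteIndex G
    obtain ⟨K', hK'norm, hK'index, hK'le, θ, hθ⟩ :=
      hii K inferInstance Subgroup.FiniteIndex.index_ne_zero
    haveI : K'.Normal := hK'norm
    refine ⟨descAut K' hK'le θ, ?_⟩
    rw [descAut_mk, hθ, projK_mk]
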